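/- arXiv:1708.07205 — 3 statements merged into one kernel-verified Lean document; each statement's English description precedes it below -/
import Mathlib

section
/- Let A be a rigid symmetric monoidal category, let D be a monoidal category, and let F, G : A ⥤ D be strong monoidal functors. Let c be an object of D equipped with a family of morphisms φ_a : F(a) ⊗ c ⟶ c ⊗ G(a), natural in a ∈ A, which is compatible with units (φ at the monoidal unit of A agrees, via the monoidal structure isomorphisms of F and G and the unitors of D, with the identity of c) and multiplicative (for all a₁, a₂ ∈ A, the morphism φ_{a₁ ⊗ a₂} agrees, via the monoidal structure isomorphisms of F and G and the associators of D, with the composite (F(a₁) ⊗ F(a₂)) ⊗ c ⟶ F(a₁) ⊗ (c ⊗ G(a₂)) ⟶ (c ⊗ G(a₁)) ⊗ G(a₂) obtained by applying φ_{a₂} and then φ_{a₁}). Then every morphism φ_a is an isomorphism. -/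
open CategoryTheory MonoidalCategory Functor.LaxMonoidal Functor.OplaxMonoidal

theorem push_eval_coeval {A D : Type*} [Category A] [MonoidalCategory A]
    [Category D] [MonoidalCategory D] (F : A ⥤ D) [F.Monoidal]
    (X Y : A) [ExactPairing X Y] :
    (ε F ≫ F.map (η_ X Y) ≫ δ F X Y) ▷ F.obj X ≫
        (α_ (F.obj X) (F.obj Y) (F.obj X)).hom ≫
          F.obj X ◁ (μ F Y X ≫ F.map (ε_ X Y) ≫ η F) =
      (λ_ (F.obj X)).hom ≫ (ρ_ (F.obj X)).inv := by
  have h := congrArg F.map (ExactPairing.evaluation_coevaluation' (X := X) (Y := Y))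
  simp only [F.map_comp, Functor.Monoidal.map_whiskerLeft, Functor.Monoidal.map_whiskerRight,
    Functor.Monoidal.map_associator, Functor.Monoidal.map_rightUnitor_inv,
    Functor.Monoidal.map_leftUnitor, Category.assoc, Functor.Monoidal.μ_δ_assoc] at h
  have h' := congrArg (fun t => μ F (𝟙_ A) X ≫ t ≫ δ F X (𝟙_ A)) h
  simp only [Category.assoc, Functor.Monoidal.μ_δ_assoc, Functor.Monoidal.μ_δ,
    Category.comp_id] at h'
  simp only [MonoidalCategory.whiskerLeft_comp, comp_whiskerRight, Category.assoc,
    ExactPairing.coevaluation, ExactPairing.evaluation] at h' ⊢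
  rw [reassoc_of% h']
  simp [Functor.Monoidal.whiskerLeft_ε_η, Functor.Monoidal.whiskerRight_ε_η_assoc]

/-- Let `A` be a rigid symmetric monoidal category, `D` a monoidal category, and
`F, G : A ⥤ D` strong monoidal functors.  If `c : D` carries a right-lax central
structure with respect to `F` and `G`, i.e. a family of morphisms
`φ a : F.obj a ⊗ c ⟶ c ⊗ G.obj a` natural in `a`, compatible with the units and
multiplicative with respect to the tensor product, then every `φ a` is an
isomorphism. -/
theorem rightLaxCentralStructure_isIso
    {A : Type*} [Category A] [MonoidalCategory A] [SymmetricCategory A]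
    [RigidCategory A]
    {D : Type*} [Category D] [MonoidalCategory D]
    (F G : A ⥤ D) [F.Monoidal] [G.Monoidal] (c : D)
    (φ : ∀ a : A, F.obj a ⊗ c ⟶ c ⊗ G.obj a)
    (hnat : ∀ {a b : A} (f : a ⟶ b),
      (F.map f ⊗ₘ 𝟙 c) ≫ φ b = φ a ≫ (𝟙 c ⊗ₘ G.map f))
    (hunit : φ (𝟙_ A) =
      (inv (ε F) ⊗ₘ 𝟙 c) ≫ (λ_ c).hom ≫ (ρ_ c).inv ≫ (𝟙 c ⊗ₘ ε G))
    (hmul : ∀ a₁ a₂ : A,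
      (μ F a₁ a₂ ⊗ₘ 𝟙 c) ≫ φ (a₁ ⊗ a₂) =
        (α_ (F.obj a₁) (F.obj a₂) c).hom ≫ (𝟙 (F.obj a₁) ⊗ₘ φ a₂) ≫
          (α_ (F.obj a₁) c (G.obj a₂)).inv ≫ (φ a₁ ⊗ₘ 𝟙 (G.obj a₂)) ≫
          (α_ c (G.obj a₁) (G.obj a₂)).hom ≫ (𝟙 c ⊗ₘ μ G a₁ a₂)) :
    ∀ a : A, IsIso (φ a) := by
  simp only [id_tensorHom, tensorHom_id] at hnat hunit hmul
  have hinv : inv (ε F) = η F :=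
    IsIso.inv_eq_of_hom_inv_id (Functor.Monoidal.ε_η F)
  rw [hinv] at hunit
  have K : ∀ a₁ a₂ : A,
      F.obj a₁ ◁ φ a₂ ≫ (α_ (F.obj a₁) c (G.obj a₂)).inv ≫ φ a₁ ▷ G.obj a₂ =
        (α_ (F.obj a₁) (F.obj a₂) c).inv ≫ μ F a₁ a₂ ▷ c ≫ φ (a₁ ⊗ a₂) ≫
          c ◁ δ G a₁ a₂ ≫ (α_ c (G.obj a₁) (G.obj a₂)).inv := by
    intro a₁ a₂
    rw [reassoc_of% (hmul a₁ a₂)]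
    simp [← MonoidalCategory.whiskerLeft_comp]
  intro a
  refine ⟨𝟙 (c ⊗ G.obj a) ⊗≫ (ε F ≫ F.map (η_ a aᘁ) ≫ δ F a aᘁ) ▷ (c ⊗ G.obj a) ⊗≫
      F.obj a ◁ (φ aᘁ ▷ G.obj a) ⊗≫
      F.obj a ◁ (c ◁ (μ G aᘁ a ≫ G.map (ε_ a aᘁ) ≫ η G)) ⊗≫ 𝟙 (F.obj a ⊗ c), ?_, ?_⟩
  · -- φ a ≫ ψ = 𝟙
    calc φ a ≫ (𝟙 (c ⊗ G.obj a) ⊗≫ (ε F ≫ F.map (η_ a aᘁ) ≫ δ F a aᘁ) ▷ (c ⊗ G.obj a) ⊗≫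
          F.obj a ◁ (φ aᘁ ▷ G.obj a) ⊗≫
          F.obj a ◁ (c ◁ (μ G aᘁ a ≫ G.map (ε_ a aᘁ) ≫ η G)) ⊗≫ 𝟙 (F.obj a ⊗ c))
        = 𝟙 _ ⊗≫ (𝟙_ D ◁ φ a ≫ (ε F ≫ F.map (η_ a aᘁ) ≫ δ F a aᘁ) ▷ (c ⊗ G.obj a)) ⊗≫
            F.obj a ◁ (φ aᘁ ▷ G.obj a) ⊗≫
            F.obj a ◁ (c ◁ (μ G aᘁ a ≫ G.map (ε_ a aᘁ) ≫ η G)) ⊗≫ 𝟙 _ := by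
          monoidal
      _ = 𝟙 _ ⊗≫ (ε F ≫ F.map (η_ a aᘁ) ≫ δ F a aᘁ) ▷ (F.obj a ⊗ c) ⊗≫
            (F.obj a ⊗ F.obj aᘁ) ◁ φ a ⊗≫
            F.obj a ◁ (φ aᘁ ▷ G.obj a) ⊗≫
            F.obj a ◁ (c ◁ (μ G aᘁ a ≫ G.map (ε_ a aᘁ) ≫ η G)) ⊗≫ 𝟙 _ := by
          rw [whisker_exchange]; monoidal
      _ = 𝟙 _ ⊗≫ (ε F ≫ F.map (η_ a aᘁ) ≫ δ F a aᘁ) ▷ (F.obj a ⊗ c) ⊗≫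
            F.obj a ◁ (F.obj aᘁ ◁ φ a ≫ (α_ (F.obj aᘁ) c (G.obj a)).inv ≫ φ aᘁ ▷ G.obj a) ⊗≫
            F.obj a ◁ (c ◁ (μ G aᘁ a ≫ G.map (ε_ a aᘁ) ≫ η G)) ⊗≫ 𝟙 _ := by
          monoidal
      _ = 𝟙 _ ⊗≫ (ε F ≫ F.map (η_ a aᘁ) ≫ δ F a aᘁ) ▷ (F.obj a ⊗ c) ⊗≫
            F.obj a ◁ ((α_ (F.obj aᘁ) (F.obj a) c).inv ≫ μ F aᘁ a ▷ c ≫ φ (aᘁ ⊗ a) ≫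
              c ◁ δ G aᘁ a ≫ (α_ c (G.obj aᘁ) (G.obj a)).inv) ⊗≫
            F.obj a ◁ (c ◁ (μ G aᘁ a ≫ G.map (ε_ a aᘁ) ≫ η G)) ⊗≫ 𝟙 _ := by
          rw [K]
      _ = 𝟙 _ ⊗≫ (ε F ≫ F.map (η_ a aᘁ) ≫ δ F a aᘁ) ▷ (F.obj a ⊗ c) ⊗≫
            F.obj a ◁ (μ F aᘁ a ▷ c) ⊗≫
            F.obj a ◁ (φ (aᘁ ⊗ a)) ⊗≫
            F.obj a ◁ (c ◁ (δ G aᘁ a ≫ μ G aᘁ a)) ⊗≫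
            F.obj a ◁ (c ◁ (G.map (ε_ a aᘁ) ≫ η G)) ⊗≫ 𝟙 _ := by
          monoidal
      _ = 𝟙 _ ⊗≫ (ε F ≫ F.map (η_ a aᘁ) ≫ δ F a aᘁ) ▷ (F.obj a ⊗ c) ⊗≫
            F.obj a ◁ (μ F aᘁ a ▷ c) ⊗≫
            F.obj a ◁ (φ (aᘁ ⊗ a) ≫ c ◁ G.map (ε_ a aᘁ)) ⊗≫
            F.obj a ◁ (c ◁ η G) ⊗≫ 𝟙 _ := by
          rw [Functor.Monoidal.δ_μ]; monoidal
      _ = 𝟙 _ ⊗≫ (ε F ≫ F.map (η_ a aᘁ) ≫ δ F a aᘁ) ▷ (F.obj a ⊗ c) ⊗≫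
            F.obj a ◁ (μ F aᘁ a ▷ c) ⊗≫
            F.obj a ◁ (F.map (ε_ a aᘁ) ▷ c ≫ φ (𝟙_ A)) ⊗≫
            F.obj a ◁ (c ◁ η G) ⊗≫ 𝟙 _ := by
          rw [← hnat (ε_ a aᘁ)]
      _ = 𝟙 _ ⊗≫ (ε F ≫ F.map (η_ a aᘁ) ≫ δ F a aᘁ) ▷ (F.obj a ⊗ c) ⊗≫
            F.obj a ◁ ((μ F aᘁ a ≫ F.map (ε_ a aᘁ) ≫ η F) ▷ c) ⊗≫
            F.obj a ◁ (c ◁ (ε G ≫ η G)) ⊗≫ 𝟙 _ := by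
          rw [hunit]; monoidal
      _ = 𝟙 _ ⊗≫ (((ε F ≫ F.map (η_ a aᘁ) ≫ δ F a aᘁ) ▷ F.obj a ≫
            (α_ (F.obj a) (F.obj aᘁ) (F.obj a)).hom ≫
            F.obj a ◁ (μ F aᘁ a ≫ F.map (ε_ a aᘁ) ≫ η F)) ▷ c) ⊗≫ 𝟙 _ := by
          rw [Functor.Monoidal.ε_η]; monoidal
      _ = 𝟙 (F.obj a ⊗ c) := by
          rw [push_eval_coeval F a aᘁ]; monoidal
  · -- ψ ≫ φ a = 𝟙
    calc (𝟙 (c ⊗ G.obj a) ⊗≫ (ε F ≫ F.map (η_ a aᘁ) ≫ δ F a aᘁ) ▷ (c ⊗ G.obj a) ⊗≫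
          F.obj a ◁ (φ aᘁ ▷ G.obj a) ⊗≫
          F.obj a ◁ (c ◁ (μ G aᘁ a ≫ G.map (ε_ a aᘁ) ≫ η G)) ⊗≫ 𝟙 (F.obj a ⊗ c)) ≫ φ a
        = 𝟙 _ ⊗≫ (ε F ≫ F.map (η_ a aᘁ) ≫ δ F a aᘁ) ▷ (c ⊗ G.obj a) ⊗≫
            F.obj a ◁ (φ aᘁ ▷ G.obj a) ⊗≫
            ((F.obj a ⊗ c) ◁ (μ G aᘁ a ≫ G.map (ε_ a aᘁ) ≫ η G) ≫ φ a ▷ 𝟙_ D) ⊗≫ 𝟙 _ := by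
          monoidal
      _ = 𝟙 _ ⊗≫ (ε F ≫ F.map (η_ a aᘁ) ≫ δ F a aᘁ) ▷ (c ⊗ G.obj a) ⊗≫
            ((F.obj a ◁ φ aᘁ ≫ (α_ (F.obj a) c (G.obj aᘁ)).inv ≫ φ a ▷ G.obj aᘁ) ▷ G.obj a) ⊗≫
            (c ⊗ G.obj a) ◁ (μ G aᘁ a ≫ G.map (ε_ a aᘁ) ≫ η G) ⊗≫ 𝟙 _ := by
          rw [whisker_exchange]; monoidal
      _ = 𝟙 _ ⊗≫ (ε F ≫ F.map (η_ a aᘁ) ≫ δ F a aᘁ) ▷ (c ⊗ G.obj a) ⊗≫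
            (((α_ (F.obj a) (F.obj aᘁ) c).inv ≫ μ F a aᘁ ▷ c ≫ φ (a ⊗ aᘁ) ≫
              c ◁ δ G a aᘁ ≫ (α_ c (G.obj a) (G.obj aᘁ)).inv) ▷ G.obj a) ⊗≫
            (c ⊗ G.obj a) ◁ (μ G aᘁ a ≫ G.map (ε_ a aᘁ) ≫ η G) ⊗≫ 𝟙 _ := by
          rw [K]
      _ = 𝟙 _ ⊗≫ (ε F ≫ F.map (η_ a aᘁ)) ▷ (c ⊗ G.obj a) ⊗≫
            (((δ F a aᘁ ≫ μ F a aᘁ) ▷ c) ▷ G.obj a) ⊗≫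
            ((φ (a ⊗ aᘁ) ≫ c ◁ δ G a aᘁ) ▷ G.obj a) ⊗≫
            (c ⊗ G.obj a) ◁ (μ G aᘁ a ≫ G.map (ε_ a aᘁ) ≫ η G) ⊗≫ 𝟙 _ := by
          monoidal
      _ = 𝟙 _ ⊗≫ ε F ▷ (c ⊗ G.obj a) ⊗≫
            ((F.map (η_ a aᘁ) ▷ c ≫ φ (a ⊗ aᘁ)) ▷ G.obj a) ⊗≫
            ((c ◁ δ G a aᘁ) ▷ G.obj a) ⊗≫
            (c ⊗ G.obj a) ◁ (μ G aᘁ a ≫ G.map (ε_ a aᘁ) ≫ η G) ⊗≫ 𝟙 _ := by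
          rw [Functor.Monoidal.δ_μ]; monoidal
      _ = 𝟙 _ ⊗≫ ε F ▷ (c ⊗ G.obj a) ⊗≫
            ((φ (𝟙_ A) ≫ c ◁ G.map (η_ a aᘁ)) ▷ G.obj a) ⊗≫
            ((c ◁ δ G a aᘁ) ▷ G.obj a) ⊗≫
            (c ⊗ G.obj a) ◁ (μ G aᘁ a ≫ G.map (ε_ a aᘁ) ≫ η G) ⊗≫ 𝟙 _ := by
          rw [hnat (η_ a aᘁ)]
      _ = 𝟙 _ ⊗≫ ((ε F ≫ η F) ▷ (c ⊗ G.obj a)) ⊗≫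
            ((c ◁ (ε G ≫ G.map (η_ a aᘁ) ≫ δ G a aᘁ)) ▷ G.obj a) ⊗≫
            (c ⊗ G.obj a) ◁ (μ G aᘁ a ≫ G.map (ε_ a aᘁ) ≫ η G) ⊗≫ 𝟙 _ := by
          rw [hunit]; monoidal
      _ = 𝟙 _ ⊗≫ c ◁ ((ε G ≫ G.map (η_ a aᘁ) ≫ δ G a aᘁ) ▷ G.obj a ≫
            (α_ (G.obj a) (G.obj aᘁ) (G.obj a)).hom ≫
            G.obj a ◁ (μ G aᘁ a ≫ G.map (ε_ a aᘁ) ≫ η G)) ⊗≫ 𝟙 _ := by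
          rw [Functor.Monoidal.ε_η]; monoidal
      _ = 𝟙 (c ⊗ G.obj a) := by
          rw [push_eval_coeval G a aᘁ]; monoidal
end

section
/- Let A be a rigid monoidal category and let c be an object of A equipped with a family of morphisms φ_a : a ⊗ c ⟶ c ⊗ a, natural in a ∈ A, compatible with the unit (φ at the monoidal unit agrees with the composite of the left and inverse right unitors of c) and multiplicative (for all a₁, a₂, the morphism φ_{a₁ ⊗ a₂} agrees, via the associators, with the composite (a₁ ⊗ a₂) ⊗ c ⟶ a₁ ⊗ (c ⊗ a₂) ⟶ (c ⊗ a₁) ⊗ a₂ obtained by applying φ_{a₂} and then φ_{a₁}). Then every φ_a is an isomorphism; in particular the pair (c, φ) defines an object of the Drinfeld center of A. -/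
open CategoryTheory MonoidalCategory

/-- Over a rigid monoidal category `A`, any lax half-braiding on an object `c`
(a family `φ a : a ⊗ c ⟶ c ⊗ a`, natural in `a`, compatible with the unit and
multiplicative with respect to tensor products, but not assumed invertible) is a
genuine half-braiding: every `φ a` is an isomorphism.  In particular `(c, φ)`
defines an object of the Drinfeld center of `A`. -/
theorem laxHalfBraiding_isIso
    {A : Type*} [Category A] [MonoidalCategory A] [RigidCategory A]
    (c : A) (φ : ∀ a : A, a ⊗ c ⟶ c ⊗ a)
    (hnat : ∀ {a b : A} (f : a ⟶ b),
      (f ⊗ₘ 𝟙 c) ≫ φ b = φ a ≫ (𝟙 c ⊗ₘ f))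
    (hunit : φ (𝟙_ A) = (λ_ c).hom ≫ (ρ_ c).inv)
    (hmul : ∀ a₁ a₂ : A,
      φ (a₁ ⊗ a₂) =
        (α_ a₁ a₂ c).hom ≫ (𝟙 a₁ ⊗ₘ φ a₂) ≫ (α_ a₁ c a₂).inv ≫
          (φ a₁ ⊗ₘ 𝟙 a₂) ≫ (α_ c a₁ a₂).hom) :
    ∀ a : A, IsIso (φ a) := by
  intro a
  have hnat' : ∀ {x y : A} (f : x ⟶ y), f ▷ c ≫ φ y = φ x ≫ c ◁ f := by
    intro x y f; simpa only [tensorHom_id, id_tensorHom] using hnat f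
  have hmul' : ∀ x y : A, φ (x ⊗ y) =
      (α_ x y c).hom ≫ x ◁ φ y ≫ (α_ x c y).inv ≫ φ x ▷ y ≫ (α_ c x y).hom := by
    intro x y; simpa only [tensorHom_id, id_tensorHom] using hmul x y
  set d := aᘁ with hd
  set η : 𝟙_ A ⟶ a ⊗ d := η_ a d with hη
  set ε : d ⊗ a ⟶ 𝟙_ A := ε_ a d with hε
  set ψ : c ⊗ a ⟶ a ⊗ c :=
    (λ_ (c ⊗ a)).inv ≫ η ▷ (c ⊗ a) ≫ (α_ a d (c ⊗ a)).hom ≫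
      a ◁ ((α_ d c a).inv ≫ φ d ▷ a ≫ (α_ c d a).hom ≫ c ◁ ε ≫ (ρ_ c).hom)
    with hψ
  have zig : η ▷ a ≫ (α_ a d a).hom ≫ a ◁ ε = (λ_ a).hom ≫ (ρ_ a).inv :=
    ExactPairing.evaluation_coevaluation a d
  have goal1 : φ a ≫ ψ = 𝟙 (a ⊗ c) := by
    have step1 : φ a ≫ ψ =
        (λ_ (a ⊗ c)).inv ≫ η ▷ (a ⊗ c) ≫ (α_ a d (a ⊗ c)).hom ≫
          a ◁ (d ◁ φ a ≫ (α_ d c a).inv ≫ φ d ▷ a ≫ (α_ c d a).hom ≫ c ◁ ε ≫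
            (ρ_ c).hom) := by
      rw [hψ, leftUnitor_inv_naturality_assoc, whisker_exchange_assoc]
      simp
    have merge : d ◁ φ a ≫ (α_ d c a).inv ≫ φ d ▷ a ≫ (α_ c d a).hom ≫ c ◁ ε ≫ (ρ_ c).hom
        = (α_ d a c).inv ≫ ε ▷ c ≫ (λ_ c).hom := by
      have h2 : d ◁ φ a ≫ (α_ d c a).inv ≫ φ d ▷ a ≫ (α_ c d a).hom
          = (α_ d a c).inv ≫ φ (d ⊗ a) := by
        rw [hmul' d a]; simp
      rw [reassoc_of% h2]
      slice_lhs 2 3 => rw [← hnat' ε]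
      simp [hunit]
    rw [step1, merge]
    calc (λ_ (a ⊗ c)).inv ≫ η ▷ (a ⊗ c) ≫ (α_ a d (a ⊗ c)).hom ≫
          a ◁ ((α_ d a c).inv ≫ ε ▷ c ≫ (λ_ c).hom)
        = (λ_ a).inv ▷ c ≫ (η ▷ a ≫ (α_ a d a).hom ≫ a ◁ ε) ▷ c ≫ (ρ_ a).hom ▷ c := by
          monoidal
      _ = 𝟙 (a ⊗ c) := by rw [zig]; monoidal
  have goal2 : ψ ≫ φ a = 𝟙 (c ⊗ a) := by
    rw [hψ]
    calc ((λ_ (c ⊗ a)).inv ≫ η ▷ (c ⊗ a) ≫ (α_ a d (c ⊗ a)).hom ≫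
        a ◁ ((α_ d c a).inv ≫ φ d ▷ a ≫ (α_ c d a).hom ≫ c ◁ ε ≫ (ρ_ c).hom)) ≫ φ a
        = ((λ_ (c ⊗ a)).inv ≫ η ▷ (c ⊗ a) ≫ (α_ a d (c ⊗ a)).hom ≫
            a ◁ ((α_ d c a).inv ≫ φ d ▷ a ≫ (α_ c d a).hom) ≫ (α_ a c (d ⊗ a)).inv) ≫
            ((a ⊗ c) ◁ ε) ≫ (ρ_ (a ⊗ c)).hom ≫ φ a := by
          monoidal
      _ = ((λ_ (c ⊗ a)).inv ≫ η ▷ (c ⊗ a) ≫ (α_ a d (c ⊗ a)).hom ≫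
            a ◁ ((α_ d c a).inv ≫ φ d ▷ a ≫ (α_ c d a).hom) ≫ (α_ a c (d ⊗ a)).inv) ≫
            (φ a ▷ (d ⊗ a)) ≫ ((c ⊗ a) ◁ ε) ≫ (ρ_ (c ⊗ a)).hom := by
          rw [← rightUnitor_naturality, whisker_exchange_assoc]
      _ = (λ_ (c ⊗ a)).inv ≫ (α_ (𝟙_ A) c a).inv ≫
            ((η ▷ c ≫ (α_ a d c).hom ≫ a ◁ φ d ≫ (α_ a c d).inv ≫ φ a ▷ d ≫
              (α_ c a d).hom) ▷ a) ≫
            (α_ c ((a : A) ⊗ d) a).hom ≫ c ◁ (α_ a d a).hom ≫ (α_ c a ((d : A) ⊗ a)).inv ≫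
            (_ ◁ ε) ≫ (ρ_ _).hom := by
          monoidal
      _ = (λ_ (c ⊗ a)).inv ≫ (α_ (𝟙_ A) c a).inv ≫ ((η ▷ c ≫ φ (a ⊗ d)) ▷ a) ≫
            (α_ c ((a : A) ⊗ d) a).hom ≫ c ◁ (α_ a d a).hom ≫ (α_ c a ((d : A) ⊗ a)).inv ≫
            (_ ◁ ε) ≫ (ρ_ _).hom := by
          rw [hmul' a d]
      _ = (λ_ (c ⊗ a)).inv ≫ (α_ (𝟙_ A) c a).inv ≫ (((λ_ c).hom ≫ (ρ_ c).inv ≫ c ◁ η) ▷ a) ≫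
            (α_ c ((a : A) ⊗ d) a).hom ≫ c ◁ (α_ a d a).hom ≫ (α_ c a ((d : A) ⊗ a)).inv ≫
            (_ ◁ ε) ≫ (ρ_ _).hom := by
          rw [hnat' η, hunit]; simp only [Category.assoc]
      _ = c ◁ (λ_ a).inv ≫ c ◁ (η ▷ a ≫ (α_ a d a).hom ≫ a ◁ ε) ≫ c ◁ (ρ_ a).hom := by
          monoidal
      _ = 𝟙 (c ⊗ a) := by rw [zig]; simp
  exact ⟨ψ, goal1, goal2⟩
end

section
/- Let FinSurj denote the category whose objects are finite nonempty sets and whose morphisms are surjections. Let TwArr denote the category whose objects are surjections φ : J ↠ K in FinSurj, and in which a morphism from (φ₁ : J₁ ↠ K₁) to (φ₂ : J₂ ↠ K₂) is a pair of surjections ψ_J : J₁ ↠ J₂ and ψ_K : K₂ ↠ K₁ such that φ₁ = ψ_K ∘ φ₂ ∘ ψ_J. For a finite nonempty set I, let TwArr_{I/} denote the category whose objects are pairs of composable surjections I ↠ J ↠ K and whose morphisms from (I ↠ J₁ ↠ K₁) to (I ↠ J₂ ↠ K₂) are pairs (ψ_J : J₁ ↠ J₂, ψ_K : K₂ ↠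 K₁) with ψ_J compatible with the given surjections from I and satisfying φ₁ = ψ_K ∘ φ₂ ∘ ψ_J. Precomposition makes I ↦ TwArr_{I/} a functor from FinSurj^op to the category of categories. Then the projection functor from the Grothendieck construction of this functor to TwArr, sending (I, I ↠ J ↠ K) to (J ↠ K), is a final (cofinal) functor: for every functor from TwArr to any cocomplete category, restriction along this projection does not change the colimit. -/
open CategoryTheory

universe u

/-- The category of finite nonempty sets with surjective maps as morphisms. -/
structure FinSurjCat : Type (u + 1) where
  carrier : Type u
  [fintype : Fintype carrier]
  [nonempty : Nonempty carrier]

namespace FinSurjCat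

attribute [instance] fintype nonempty

instance : CoeSort FinSurjCat.{u} (Type u) :=
  ⟨FinSurjCat.carrier⟩

instance : Category FinSurjCat.{u} where
  Hom J K := { f : J → K // Function.Surjective f }
  id J := ⟨_root_.id, Function.surjective_id⟩
  comp f g := ⟨g.1 ∘ f.1, g.2.comp f.2⟩
  id_comp f := Subtype.ext rfl
  comp_id f := Subtype.ext rfl
  assoc f g h := Subtype.ext rfl

end FinSurjCat

/-- The twisted-arrows category `TwArr`: objects are surjections `φ : J ↠ K` of
finite nonempty sets; a morphism `(J₁ ↠ K₁) ⟶ (J₂ ↠ K₂)` is a pair of surjections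
`ψJ : J₁ ↠ J₂` and `ψK : K₂ ↠ K₁` with `φ₁ = ψK ∘ φ₂ ∘ ψJ`. -/
structure TwArr : Type (u + 1) where
  J : FinSurjCat.{u}
  K : FinSurjCat.{u}
  φ : J ⟶ K

namespace TwArr

/-- Morphisms in `TwArr`. -/
structure Hom (t₁ t₂ : TwArr.{u}) where
  ψJ : t₁.J ⟶ t₂.J
  ψK : t₂.K ⟶ t₁.K
  w : t₁.φ = ψJ ≫ t₂.φ ≫ ψK

lemma Hom.ext' {t₁ t₂ : TwArr.{u}} {f g : Hom t₁ t₂}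
    (h₁ : f.ψJ = g.ψJ) (h₂ : f.ψK = g.ψK) : f = g := by
  cases f; cases g; cases h₁; cases h₂; rfl

instance : Category TwArr.{u} where
  Hom := Hom
  id t := ⟨𝟙 t.J, 𝟙 t.K, by simp⟩
  comp {t₁ t₂ t₃} f g :=
    ⟨f.ψJ ≫ g.ψJ, g.ψK ≫ f.ψK, by rw [f.w, g.w]; simp⟩
  id_comp f := Hom.ext' (by simp) (by simp)
  comp_id f := Hom.ext' (by simp) (by simp)
  assoc f g h := Hom.ext' (by simp) (by simp)

end TwArr

/-- The Grothendieck construction (total category) of the functor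
`FinSurjCat^op ⥤ Cat` sending a finite nonempty set `I` to the category
`TwArr_{I/}` of pairs of composable surjections `I ↠ J ↠ K` (with morphisms as
in `TwArr`, compatible with the maps from `I`), the functoriality in `I` being
given by precomposition.  Its objects are triples `(I, I ↠ J ↠ K)`; a morphism
`(I₁, I₁ ↠ J₁ ↠ K₁) ⟶ (I₂, I₂ ↠ J₂ ↠ K₂)` consists of a base morphism
`op I₁ ⟶ op I₂` (i.e. a surjection `σ : I₂ ↠ I₁`) together with a morphism
`(I₂ ↠ J₁ ↠ K₁) ⟶ (I₂ ↠ J₂ ↠ K₂)` in `TwArr_{I₂/}`, where the first object is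
obtained by precomposing with `σ`. -/
structure TwArrGrothendieck : Type (u + 1) where
  I : FinSurjCat.{u}
  J : FinSurjCat.{u}
  K : FinSurjCat.{u}
  p : I ⟶ J
  φ : J ⟶ K

namespace TwArrGrothendieck

/-- Morphisms in the Grothendieck construction. -/
structure Hom (t₁ t₂ : TwArrGrothendieck.{u}) where
  σ : t₂.I ⟶ t₁.I
  ψJ : t₁.J ⟶ t₂.J
  ψK : t₂.K ⟶ t₁.K
  wp : (σ ≫ t₁.p) ≫ ψJ = t₂.p
  w : t₁.φ = ψJ ≫ t₂.φ ≫ ψK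

lemma Hom.ext' {t₁ t₂ : TwArrGrothendieck.{u}} {f g : Hom t₁ t₂}
    (h₀ : f.σ = g.σ) (h₁ : f.ψJ = g.ψJ) (h₂ : f.ψK = g.ψK) : f = g := by
  cases f; cases g; cases h₀; cases h₁; cases h₂; rfl

instance : Category TwArrGrothendieck.{u} where
  Hom := Hom
  id t := ⟨𝟙 t.I, 𝟙 t.J, 𝟙 t.K, by simp, by simp⟩
  comp {t₁ t₂ t₃} f g :=
    ⟨g.σ ≫ f.σ, f.ψJ ≫ g.ψJ, g.ψK ≫ f.ψK,
      by rw [← g.wp, ← f.wp]; simp,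
      by rw [f.w, g.w]; simp⟩
  id_comp f := Hom.ext' (by simp) (by simp) (by simp)
  comp_id f := Hom.ext' (by simp) (by simp) (by simp)
  assoc f g h := Hom.ext' (by simp) (by simp) (by simp)

end TwArrGrothendieck

/-- The projection from the Grothendieck construction of `I ↦ TwArr_{I/}` to
`TwArr`, sending `(I, I ↠ J ↠ K)` to `(J ↠ K)`. -/
def twArrProjection : TwArrGrothendieck.{u} ⥤ TwArr.{u} where
  obj t := ⟨t.J, t.K, t.φ⟩
  map f := ⟨f.ψJ, f.ψK, f.w⟩
  map_id t := rfl
  map_comp f g := rfl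

/-- The projection `(I, I ↠ J ↠ K) ↦ (J ↠ K)` from the Grothendieck construction
of the functor `I ↦ TwArr_{I/} : FinSurjCat^op ⥤ Cat` to the twisted-arrows
category `TwArr` is a final (cofinal) functor: restriction along it does not
change colimits. -/
theorem twArrProjection_final : twArrProjection.{u}.Final := by
  constructor
  intro t
  -- the canonical object `(t.J, t.J = t.J ↠ t.K)` with the identity structure map
  let X₀ : StructuredArrow t twArrProjection.{u} :=
    StructuredArrow.mk (Y := ⟨t.J, t.J, t.K, 𝟙 t.J, t.φ⟩)
      (⟨𝟙 t.J, 𝟙 t.K, Subtype.ext rfl⟩ :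
        t ⟶ twArrProjection.{u}.obj ⟨t.J, t.J, t.K, 𝟙 t.J, t.φ⟩)
  have key : ∀ X : StructuredArrow t twArrProjection.{u}, Zigzag X X₀ := by
    intro X
    classical
    -- the fiber product of `p : I ↠ J'` and `ψJ : t.J ↠ J'`
    let MI : FinSurjCat.{u} :=
      { carrier := {q : X.right.I × t.J // X.right.p.1 q.1 = X.hom.ψJ.1 q.2}
        fintype := Fintype.ofFinite _
        nonempty := by
          obtain ⟨i⟩ := X.right.I.nonempty
          obtain ⟨j, hj⟩ := X.hom.ψJ.2 (X.right.p.1 i)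
          exact ⟨⟨(i, j), hj.symm⟩⟩ }
    let pM : MI ⟶ X.right.J :=
      ⟨fun q => X.right.p.1 q.1.1, by
        intro j'
        obtain ⟨i, hi⟩ := X.right.p.2 j'
        obtain ⟨j, hj⟩ := X.hom.ψJ.2 j'
        exact ⟨⟨(i, j), by simp [hi, hj]⟩, hi⟩⟩
    let M : StructuredArrow t twArrProjection.{u} :=
      StructuredArrow.mk (Y := ⟨MI, X.right.J, X.right.K, pM, X.right.φ⟩)
        (⟨X.hom.ψJ, X.hom.ψK, X.hom.w⟩ :
          t ⟶ twArrProjection.{u}.obj ⟨MI, X.right.J, X.right.K, pM, X.right.φ⟩)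
    -- the morphism `X ⟶ M`
    let σ₁ : MI ⟶ X.right.I :=
      ⟨fun q => q.1.1, by
        intro i
        obtain ⟨j, hj⟩ := X.hom.ψJ.2 (X.right.p.1 i)
        exact ⟨⟨(i, j), hj.symm⟩, rfl⟩⟩
    let f₁ : X.right ⟶ M.right :=
      ⟨σ₁, 𝟙 X.right.J, 𝟙 X.right.K, Subtype.ext rfl, Subtype.ext rfl⟩
    have hf₁ : X.hom ≫ twArrProjection.{u}.map f₁ = M.hom :=
      TwArr.Hom.ext' (Subtype.ext rfl) (Subtype.ext rfl)
    -- the morphism `X₀ ⟶ M`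
    let σ₂ : MI ⟶ t.J :=
      ⟨fun q => q.1.2, by
        intro j
        obtain ⟨i, hi⟩ := X.right.p.2 (X.hom.ψJ.1 j)
        exact ⟨⟨(i, j), hi⟩, rfl⟩⟩
    let f₂ : X₀.right ⟶ M.right :=
      ⟨σ₂, X.hom.ψJ, X.hom.ψK,
        Subtype.ext (funext fun q => q.2.symm), X.hom.w⟩
    have hf₂ : X₀.hom ≫ twArrProjection.{u}.map f₂ = M.hom :=
      TwArr.Hom.ext' (Subtype.ext rfl) (Subtype.ext rfl)
    have zag1 : Zag X M := Or.inl ⟨StructuredArrow.homMk f₁ hf₁⟩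
    have zag2 : Zag M X₀ := Or.inr ⟨StructuredArrow.homMk f₂ hf₂⟩
    exact (Relation.ReflTransGen.single zag1).tail zag2
  have : Nonempty (StructuredArrow t twArrProjection.{u}) := ⟨X₀⟩
  exact zigzag_isConnected fun X Y => (key X).trans (zigzag_symmetric.symm _ _ (key Y))
end
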